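/- Let n ≥ 1 and for each i : Fin n let α i be a nonempty finite type and let σ i 0 and σ i 1 be density matrices in Matrix (α i) (α i) ℂ. Then the trace distance between the even-parity mixture 2^{-(n-1)} · ∑_{r even parity} ⨂_i σ i (r i) and the odd-parity mixture 2^{-(n-1)} · ∑_{r odd parity} ⨂_i σ i (r i) equals the product ∏ i, TD(σ i 0, σ i 1). -/

import Mathlib

open Matrix BigOperators
open scoped ComplexOrder

/-- The `n`-fold tensor (Kronecker) product of matrices `M i : Matrix (α i) (α i) ℂ`,
indexed by `Π i, α i`, with entries `∏ i, M i (x i) (y i)`. -/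
def tensorPow {n : ℕ} {α : Fin n → Type*} [∀ i, Fintype (α i)]
    (M : ∀ i, Matrix (α i) (α i) ℂ) : Matrix (∀ i, α i) (∀ i, α i) ℂ :=
  Matrix.of fun x y => ∏ i, M i (x i) (y i)

/-- Parity of a bit string `r : Fin n → Fin 2`, computed in `ZMod 2`. -/
def parity {n : ℕ} (r : Fin n → Fin 2) : ZMod 2 := ∑ i, ((r i : ℕ) : ZMod 2)

/-- The square root of a positive semidefinite matrix, as `Matrix.PosSemidef.sqrt` was defined
in the older Mathlib (removed since). -/
noncomputable def posSemidefSqrt {n : Type*} [Fintype n] [DecidableEq n]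
    {A : Matrix n n ℂ} (hA : A.PosSemidef) : Matrix n n ℂ :=
  hA.1.eigenvectorUnitary.1 * diagonal ((↑) ∘ (√·) ∘ hA.1.eigenvalues) *
    (star hA.1.eigenvectorUnitary : Matrix n n ℂ)

/-- The trace norm of a square complex matrix: the trace of the positive semidefinite
square root of `Aᴴ * A`. -/
noncomputable def traceNorm {α : Type*} [Fintype α] [DecidableEq α]
    (A : Matrix α α ℂ) : ℝ :=
  ((posSemidefSqrt (Matrix.posSemidef_conjTranspose_mul_self A)).trace).re

/-- The trace distance of two matrices. -/
noncomputable def traceDist {α : Type*} [Fintype α] [DecidableEq α]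
    (ρ σ : Matrix α α ℂ) : ℝ :=
  (1 / 2) * traceNorm (ρ - σ)

/-- A density matrix: Hermitian positive semidefinite with trace 1. -/
def IsDensityMatrix {α : Type*} [Fintype α] (ρ : Matrix α α ℂ) : Prop :=
  ρ.PosSemidef ∧ ρ.trace = 1

section psqrt
open scoped MatrixOrder
variable {β : Type*} [Fintype β] [DecidableEq β] {A : Matrix β β ℂ}

lemma posSemidefSqrt_eq_cfc (hA : A.PosSemidef) : posSemidefSqrt hA = CFC.sqrt A := by
  rw [CFC.sqrt_eq_cfc, cfc_nnreal_eq_real _ A, hA.1.cfc_eq]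
  simp only [IsHermitian.cfc, posSemidefSqrt, Unitary.conjStarAlgAut_apply]
  congr 3
  funext i
  simp [Real.coe_sqrt, Real.coe_toNNReal', max_eq_left (hA.eigenvalues_nonneg i)]

lemma Matrix.PosSemidef.posSemidef_psqrt (hA : A.PosSemidef) : (posSemidefSqrt hA).PosSemidef := by
  rw [posSemidefSqrt_eq_cfc]; exact (CFC.sqrt_nonneg A).posSemidef

lemma Matrix.PosSemidef.psqrt_mul_self (hA : A.PosSemidef) :
    posSemidefSqrt hA * posSemidefSqrt hA = A := by
  rw [posSemidefSqrt_eq_cfc]; exact CFC.sqrt_mul_sqrt_self A hA.nonneg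

lemma Matrix.PosSemidef.sq_psqrt (hA : A.PosSemidef) : posSemidefSqrt hA ^ 2 = A := by
  rw [pow_two]; exact hA.psqrt_mul_self

lemma Matrix.PosSemidef.eq_psqrt_of_sq_eq {B : Matrix β β ℂ} (hB : B.PosSemidef) (hA : A.PosSemidef)
    (h : B ^ 2 = A) : B = posSemidefSqrt hA := by
  rw [posSemidefSqrt_eq_cfc, ← h]; exact (CFC.sqrt_sq B hB.nonneg).symm

lemma Matrix.PosSemidef.exists_eq_conjTranspose_mul_self' (hA : A.PosSemidef) :
    ∃ B : Matrix β β ℂ, A = Bᴴ * B :=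
  ⟨posSemidefSqrt hA, by rw [hA.posSemidef_psqrt.1.eq, hA.psqrt_mul_self]⟩

end psqrt

section lemmas
set_option linter.unusedSectionVars false
variable {n : ℕ} {α : Fin n → Type*} [∀ i, Fintype (α i)] [∀ i, DecidableEq (α i)]

lemma tensorPow_mul (M N : ∀ i, Matrix (α i) (α i) ℂ) :
    tensorPow M * tensorPow N = tensorPow (fun i => M i * N i) := by
  ext x y
  simp only [tensorPow, mul_apply, of_apply]
  rw [Fintype.prod_sum (fun i j => M i (x i) j * N i j (y i))]
  simp [Finset.prod_mul_distrib]

lemma tensorPow_conjTranspose (M : ∀ i, Matrix (α i) (α i) ℂ) :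
    (tensorPow M)ᴴ = tensorPow (fun i => (M i)ᴴ) := by
  ext x y
  simp [tensorPow, conjTranspose_apply, star_prod]

lemma tensorPow_trace (M : ∀ i, Matrix (α i) (α i) ℂ) :
    (tensorPow M).trace = ∏ i, (M i).trace := by
  simp only [trace, diag, tensorPow, of_apply]
  rw [Fintype.prod_sum (fun i j => M i j j)]

lemma tensorPow_posSemidef (M : ∀ i, Matrix (α i) (α i) ℂ)
    (h : ∀ i, (M i).PosSemidef) : (tensorPow M).PosSemidef := by
  choose B hB using fun i => (h i).exists_eq_conjTranspose_mul_self'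
  have : tensorPow M = (tensorPow B)ᴴ * tensorPow B := by
    rw [tensorPow_conjTranspose, tensorPow_mul]
    exact congrArg tensorPow (funext fun i => hB i)
  rw [this]
  exact posSemidef_conjTranspose_mul_self _

lemma hermitian_trace_re {β : Type*} [Fintype β] {A : Matrix β β ℂ}
    (h : A.IsHermitian) : ((A.trace).re : ℂ) = A.trace := by
  rw [← Complex.conj_eq_iff_re]
  calc (starRingEnd ℂ) A.trace = star A.trace := rfl
  _ = Aᴴ.trace := (trace_conjTranspose A).symm
  _ = A.trace := by rw [h.eq]

lemma traceNorm_tensorPow (M : ∀ i, Matrix (α i) (α i) ℂ) :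
    traceNorm (tensorPow M) = ∏ i, traceNorm (M i) := by
  set S : ∀ i, Matrix (α i) (α i) ℂ :=
    fun i => posSemidefSqrt (posSemidef_conjTranspose_mul_self (M i)) with hS
  have hs : ∀ i, (S i).PosSemidef :=
    fun i => (posSemidef_conjTranspose_mul_self (M i)).posSemidef_psqrt
  have hps : (tensorPow S).PosSemidef := tensorPow_posSemidef _ hs
  have hsq : (tensorPow S) ^ 2 = (tensorPow M)ᴴ * tensorPow M := by
    rw [pow_two, tensorPow_mul, tensorPow_conjTranspose, tensorPow_mul]
    refine congrArg tensorPow (funext fun i => ?_)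
    rw [← pow_two]; exact (posSemidef_conjTranspose_mul_self (M i)).sq_psqrt
  have hsqrt := hps.eq_psqrt_of_sq_eq (posSemidef_conjTranspose_mul_self (tensorPow M)) hsq
  unfold traceNorm
  rw [← hsqrt, tensorPow_trace]
  have : ∀ i ∈ Finset.univ, (S i).trace = ((((S i).trace).re : ℝ) : ℂ) :=
    fun i _ => (hermitian_trace_re (hs i).1).symm
  rw [Finset.prod_congr rfl this, ← Complex.ofReal_prod, Complex.ofReal_re]

lemma posSemidef_smul_real {β : Type*} [Fintype β] {A : Matrix β β ℂ}
    (h : A.PosSemidef) {c : ℝ} (hc : 0 ≤ c) : (c • A).PosSemidef := by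
  have h0 : (0 : ℂ) ≤ (c : ℂ) := by exact_mod_cast hc
  have := h.smul h0
  convert this using 1; ext i j; simp [Complex.real_smul]

lemma traceNorm_smul_real {β : Type*} [Fintype β] [DecidableEq β]
    (c : ℝ) (hc : 0 ≤ c) (A : Matrix β β ℂ) :
    traceNorm (c • A) = c * traceNorm A := by
  have hA := posSemidef_conjTranspose_mul_self A
  have hps : (c • posSemidefSqrt hA).PosSemidef := posSemidef_smul_real hA.posSemidef_psqrt hc
  have hsq : (c • posSemidefSqrt hA) ^ 2 = (c • A)ᴴ * (c • A) := by
    simp [pow_two, conjTranspose_smul, smul_mul_assoc, mul_smul_comm, smul_smul,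
      hA.psqrt_mul_self]
  have hsqrt := hps.eq_psqrt_of_sq_eq (posSemidef_conjTranspose_mul_self (c • A)) hsq
  unfold traceNorm
  rw [← hsqrt, trace_smul, Complex.real_smul, Complex.re_ofReal_mul]

lemma parity_sign (r : Fin n → Fin 2) (h : parity r = 0) :
    ((-1 : ℂ) ^ (∑ i, (r i : ℕ))) = 1 := by
  have : ((∑ i, (r i : ℕ) : ℕ) : ZMod 2) = 0 := by
    rw [Nat.cast_sum]; exact h
  have heven : 2 ∣ ∑ i, (r i : ℕ) := by
    rwa [ZMod.natCast_eq_zero_iff] at this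
  exact Even.neg_one_pow ((even_iff_two_dvd).2 heven)

lemma parity_sign' (r : Fin n → Fin 2) (h : ¬ parity r = 0) :
    ((-1 : ℂ) ^ (∑ i, (r i : ℕ))) = -1 := by
  have : ((∑ i, (r i : ℕ) : ℕ) : ZMod 2) ≠ 0 := by
    rw [Nat.cast_sum]; exact h
  have hodd : ¬ 2 ∣ ∑ i, (r i : ℕ) :=
    fun hdvd => this ((ZMod.natCast_eq_zero_iff _ _).2 hdvd)
  exact Odd.neg_one_pow (Nat.odd_iff.2 (Nat.two_dvd_ne_zero.mp hodd))

lemma parity_ne_zero {r : Fin n → Fin 2} : ¬ parity r = 0 ↔ parity r = 1 := by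
  have : ∀ z : ZMod 2, (¬ z = 0 ↔ z = 1) := by decide
  exact this _

lemma tensorPow_expand (σ : ∀ i, Fin 2 → Matrix (α i) (α i) ℂ) :
    tensorPow (fun i => σ i 0 - σ i 1)
      = ∑ r : Fin n → Fin 2,
          ((-1 : ℂ) ^ (∑ i, (r i : ℕ))) • tensorPow (fun i => σ i (r i)) := by
  ext x y
  have h1 : ∀ i, (σ i 0 - σ i 1) (x i) (y i)
      = ∑ j : Fin 2, (-1 : ℂ) ^ (j : ℕ) * σ i j (x i) (y i) := by
    intro i
    rw [Fin.sum_univ_two]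
    simp [Matrix.sub_apply]; ring
  simp only [tensorPow, of_apply]
  rw [Finset.prod_congr rfl (fun i _ => h1 i),
    Fintype.prod_sum (fun i j => (-1 : ℂ) ^ ((j : Fin 2) : ℕ) * σ i j (x i) (y i))]
  simp [Matrix.sum_apply, tensorPow, Finset.prod_mul_distrib,
    Finset.prod_pow_eq_pow_sum]

lemma parity_split (σ : ∀ i, Fin 2 → Matrix (α i) (α i) ℂ) :
    (∑ r ∈ Finset.univ.filter (fun r : Fin n → Fin 2 => parity r = 0),
        tensorPow (fun i => σ i (r i))) -
      ∑ r ∈ Finset.univ.filter (fun r : Fin n → Fin 2 => parity r = 1),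
        tensorPow (fun i => σ i (r i))
      = tensorPow (fun i => σ i 0 - σ i 1) := by
  rw [tensorPow_expand,
    ← Finset.sum_filter_add_sum_filter_not Finset.univ
      (fun r : Fin n → Fin 2 => parity r = 0)]
  have e0 : ∀ r ∈ Finset.univ.filter (fun r : Fin n → Fin 2 => parity r = 0),
      ((-1 : ℂ) ^ (∑ i, (r i : ℕ))) • tensorPow (fun i => σ i (r i))
        = tensorPow (fun i => σ i (r i)) := by
    intro r hr
    rw [parity_sign r (Finset.mem_filter.mp hr).2, one_smul]
  have e1 : ∀ r ∈ Finset.univ.filter (fun r : Fin n → Fin 2 => ¬ parity r = 0),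
      ((-1 : ℂ) ^ (∑ i, (r i : ℕ))) • tensorPow (fun i => σ i (r i))
        = - tensorPow (fun i => σ i (r i)) := by
    intro r hr
    rw [parity_sign' r (Finset.mem_filter.mp hr).2, neg_one_smul]
  rw [Finset.sum_congr rfl e0, Finset.sum_congr rfl e1, Finset.sum_neg_distrib,
    Finset.filter_congr (fun r _ => parity_ne_zero (r := r))]
  rw [sub_eq_add_neg]
end lemmas

theorem stmt3 {n : ℕ} (hn : 1 ≤ n) (α : Fin n → Type*) [∀ i, Fintype (α i)]
    [∀ i, DecidableEq (α i)] [∀ i, Nonempty (α i)]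
    (σ : ∀ i, Fin 2 → Matrix (α i) (α i) ℂ)
    (hσ : ∀ i b, IsDensityMatrix (σ i b)) :
    traceDist
      (((2 : ℝ) ^ (n - 1))⁻¹ •
        ∑ r ∈ Finset.univ.filter (fun r : Fin n → Fin 2 => parity r = 0),
          tensorPow (fun i => σ i (r i)))
      (((2 : ℝ) ^ (n - 1))⁻¹ •
        ∑ r ∈ Finset.univ.filter (fun r : Fin n → Fin 2 => parity r = 1),
          tensorPow (fun i => σ i (r i)))
      = ∏ i, traceDist (σ i 0) (σ i 1) := by
  obtain ⟨m, rfl⟩ : ∃ m, n = m + 1 := ⟨n - 1, (Nat.succ_pred_eq_of_pos hn).symm⟩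
  unfold traceDist
  rw [← smul_sub, parity_split σ,
    traceNorm_smul_real _ (by positivity), traceNorm_tensorPow,
    Finset.prod_mul_distrib, Finset.prod_const]
  simp only [Nat.add_sub_cancel, Finset.card_univ, Fintype.card_fin]
  rw [div_pow, one_pow, pow_succ]
  field_simp
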